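/- Under the hypotheses: I : [0,∞) → ℝ differentiable nondecreasing with I(0)=0, I'(s)=M(s)/2, 0 ≤ M ≤ 1, I ≤ H, and L := H - I(2H); let F(s) = I(s) + (δ/2)·φ(s/(δ·snr)). If 0 < t ≤ 2H and δ < (t - 2L)/log(1+snr), then inf over s ∈ [t,∞) of F(s) is strictly greater than inf of F over (0,∞); in particular every global minimizer of F is strictly less than t. -/

import Mathlib

theorem minimizer_upper_bound
    (I M : ℝ → ℝ) (H δ snr t : ℝ) (hH : 0 < H) (hδ : 0 < δ) (hsnr : 0 < snr)
    (hI0 : I 0 = 0)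
    (hmono : MonotoneOn I (Set.Ici (0:ℝ)))
    (hderiv : ∀ s, 0 ≤ s → HasDerivAt I (M s / 2) s)
    (hM : ∀ s, 0 ≤ s → 0 ≤ M s ∧ M s ≤ 1)
    (hIH : ∀ s, 0 ≤ s → I s ≤ H)
    (F : ℝ → ℝ)
    (hF : F = fun s => I s + (δ / 2) * (s / (δ * snr) - Real.log (s / (δ * snr)) - 1))
    (ht0 : 0 < t) (ht : t ≤ 2 * H)
    (hδt : δ < (t - 2 * (H - I (2 * H))) / Real.log (1 + snr)) :
    sInf (F '' Set.Ioi (0:ℝ)) < sInf (F '' Set.Ici t) ∧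
    ∀ s ∈ Set.Ioi (0:ℝ), (∀ u ∈ Set.Ioi (0:ℝ), F s ≤ F u) → s < t := by
  have hlog : 0 < Real.log (1 + snr) := Real.log_pos (by linarith)
  have hδL : δ * Real.log (1 + snr) < t - 2 * (H - I (2 * H)) := by
    have := (lt_div_iff₀ hlog).mp hδt
    linarith
  -- g = s/2 - I s is monotone on [0,∞)
  have hD : ∀ s : ℝ, 0 ≤ s → HasDerivAt (fun u => u / 2 - I u) (1 / 2 - M s / 2) s := by
    intro s hs
    exact ((hasDerivAt_id s).div_const 2).sub (hderiv s hs)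
  have hgmono : MonotoneOn (fun s => s / 2 - I s) (Set.Ici (0:ℝ)) := by
    apply monotoneOn_of_deriv_nonneg (convex_Ici 0)
    · intro s hs
      exact (hD s hs).continuousAt.continuousWithinAt
    · intro s hs
      rw [interior_Ici] at hs
      exact (hD s hs.le).differentiableAt.differentiableWithinAt
    · intro s hs
      rw [interior_Ici] at hs
      rw [(hD s hs.le).deriv]
      have := (hM s hs.le).2
      linarith
  have hIle : ∀ s, 0 ≤ s → I s ≤ s / 2 := by
    intro s hs
    have := hgmono (Set.mem_Ici.mpr le_rfl) (Set.mem_Ici.mpr hs) hs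
    simp only [hI0] at this
    linarith
  have hIt : t / 2 - (H - I (2 * H)) ≤ I t := by
    have := hgmono (Set.mem_Ici.mpr ht0.le) (Set.mem_Ici.mpr (by linarith : (0:ℝ) ≤ 2 * H)) ht
    have h2H : I (2 * H) ≤ H := hIH _ (by linarith)
    simp only at this
    linarith
  have hφ : ∀ s : ℝ, 0 < s → 0 ≤ s / (δ * snr) - Real.log (s / (δ * snr)) - 1 := by
    intro s hs
    have hx : 0 < s / (δ * snr) := by positivity
    have := Real.log_le_sub_one_of_pos hx
    linarith
  have hInn : ∀ s : ℝ, 0 ≤ s → 0 ≤ I s := by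
    intro s hs
    have := hmono (Set.mem_Ici.mpr le_rfl) (Set.mem_Ici.mpr hs) hs
    linarith [hI0 ▸ this]
  have hFnn : ∀ s ∈ Set.Ioi (0:ℝ), 0 ≤ F s := by
    intro s hs
    rw [hF]
    have := hφ s hs
    have := hInn s hs.le
    have : 0 ≤ (δ / 2) * (s / (δ * snr) - Real.log (s / (δ * snr)) - 1) := by positivity
    simp only
    linarith [hInn s (le_of_lt hs)]
  have hlow : ∀ s ∈ Set.Ici t, t / 2 - (H - I (2 * H)) ≤ F s := by
    intro s hs
    rw [Set.mem_Ici] at hs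
    have hspos : 0 < s := lt_of_lt_of_le ht0 hs
    have hIs : I t ≤ I s := hmono (Set.mem_Ici.mpr ht0.le) (Set.mem_Ici.mpr hspos.le) hs
    have hp : 0 ≤ (δ / 2) * (s / (δ * snr) - Real.log (s / (δ * snr)) - 1) := by
      have := hφ s hspos
      positivity
    rw [hF]; simp only
    linarith
  -- evaluation point
  set s₀ : ℝ := δ * snr / (1 + snr) with hs₀def
  have hs₀pos : 0 < s₀ := by positivity
  have hx : s₀ / (δ * snr) = (1 + snr)⁻¹ := by
    rw [hs₀def]
    field_simp
  have hFs₀ : F s₀ ≤ δ / 2 * Real.log (1 + snr) := by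
    rw [hF]
    simp only [hx, Real.log_inv]
    have h1 : I s₀ ≤ s₀ / 2 := hIle s₀ hs₀pos.le
    have h2 : s₀ / 2 + δ / 2 * ((1 + snr)⁻¹ - 1) = 0 := by
      rw [hs₀def]
      field_simp
      ring
    linarith
  have hkey : F s₀ < t / 2 - (H - I (2 * H)) := by linarith
  have hup : sInf (F '' Set.Ioi (0:ℝ)) ≤ F s₀ :=
    csInf_le ⟨0, by rintro _ ⟨s, hs, rfl⟩; exact hFnn s hs⟩ ⟨s₀, hs₀pos, rfl⟩
  have hlo : t / 2 - (H - I (2 * H)) ≤ sInf (F '' Set.Ici t) := by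
    apply le_csInf (Set.Nonempty.image F ⟨t, Set.mem_Ici.mpr le_rfl⟩)
    rintro _ ⟨s, hs, rfl⟩
    exact hlow s hs
  constructor
  · calc sInf (F '' Set.Ioi (0:ℝ)) ≤ F s₀ := hup
      _ < t / 2 - (H - I (2 * H)) := hkey
      _ ≤ sInf (F '' Set.Ici t) := hlo
  · intro s hs hmin
    by_contra hcon
    push_neg at hcon
    have h1 := hmin s₀ hs₀pos
    have h2 := hlow s (Set.mem_Ici.mpr hcon)
    linarith
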